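/- A tensor Q ∈ ℝ^{n×n×I₃} is orthogonal with respect to the t-product (Qᵀ * Q = Q * Qᵀ = I) if and only if every frontal slice of its Fourier transform Q̂ = fft(Q,[],3) is a unitary matrix. -/

import Mathlib

open scoped BigOperators
open Matrix

/-- A third-order real tensor of size a × b × n; the third (tube) mode is
indexed by `ZMod n` so that the circular structure of the t-product is built in
(index k corresponds to frontal slice k+1 of the paper). -/
abbrev Tensor3 (a b n : ℕ) : Type := Fin a → Fin b → ZMod n → ℝ

/-- The t-product X * Y = fold(circ(X) · unfold(Y)). -/
def tmul {a b c n : ℕ} [NeZero n] (X : Tensor3 a b n) (Y : Tensor3 b c n) :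
    Tensor3 a c n :=
  fun i j k => ∑ l : Fin b, ∑ m : ZMod n, X i l (k - m) * Y l j m

/-- The identity tensor: first frontal slice the identity matrix, rest zero. -/
def tId (a n : ℕ) : Tensor3 a a n := fun i j k => if i = j ∧ k = 0 then 1 else 0

/-- The tensor transpose: transpose every frontal slice and reverse the order
of the transposed slices 2 through n. -/
def tTr {a b n : ℕ} (X : Tensor3 a b n) : Tensor3 b a n := fun i j k => X j i (-k)

/-- The four Penrose equations for the Moore-Penrose pseudoinverse of a tensor
under the t-product (Definition 6 of the paper). -/
def tIsMP {a b n : ℕ} [NeZero n] (X : Tensor3 a b n) (B : Tensor3 b a n) : Prop :=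
  tmul X (tmul B X) = X ∧ tmul B (tmul X B) = B ∧
    tTr (tmul X B) = tmul X B ∧ tTr (tmul B X) = tmul B X

/-- The (unnormalized) discrete Fourier transform of a tube, with
ω = exp(−2πi/n): (dft x) k = Σ_m x_m ω^{k·m}. -/
noncomputable def dft (n : ℕ) [NeZero n] (x : ZMod n → ℝ) (k : ZMod n) : ℂ :=
  ∑ m : ZMod n, (x m : ℂ) * Complex.exp (-(2 * Real.pi * Complex.I) / n) ^ (k.val * m.val)

/-- The k-th frontal slice of fft(X,[],3): the DFT along every tube. -/
noncomputable def dftSlice {a b n : ℕ} [NeZero n] (X : Tensor3 a b n) (k : ZMod n) :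
    Matrix (Fin a) (Fin b) ℂ := fun i j => dft n (X i j) k


section Aux
variable (n : ℕ) [NeZero n]

noncomputable def eRoot : ℂ := Complex.exp (-(2 * Real.pi * Complex.I) / n)

lemma eRoot_pow_n : eRoot n ^ n = 1 := by
  rw [eRoot, ← Complex.exp_nat_mul]
  rw [mul_div_cancel₀]
  · rw [Complex.exp_neg, Complex.exp_two_pi_mul_I, inv_one]
  · exact_mod_cast Nat.cast_ne_zero.mpr (NeZero.ne n)

lemma eRoot_prim : IsPrimitiveRoot (eRoot n) n := by
  have h := Complex.isPrimitiveRoot_exp n (NeZero.ne n)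
  have : eRoot n = (Complex.exp (2 * Real.pi * Complex.I / n))⁻¹ := by
    rw [eRoot, ← Complex.exp_neg]; ring_nf
  rw [this]
  exact h.inv

lemma eRoot_pow_mod (a : ℕ) : eRoot n ^ a = eRoot n ^ ((a : ZMod n).val) := by
  rw [ZMod.val_natCast]
  conv_lhs => rw [← Nat.div_add_mod a n]
  rw [pow_add, pow_mul, eRoot_pow_n, one_pow, one_mul]

noncomputable def chE (t : ZMod n) : ℂ := eRoot n ^ t.val

lemma chE_natmul (a b : ℕ) : eRoot n ^ (a * b) = chE n ((a : ZMod n) * b) := by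
  rw [eRoot_pow_mod, chE, Nat.cast_mul]

lemma chE_zero : chE n 0 = 1 := by simp [chE, ZMod.val_zero]

lemma chE_add (s t : ZMod n) : chE n (s + t) = chE n s * chE n t := by
  rw [chE, chE, chE, ← pow_add, eRoot_pow_mod n (s.val + t.val)]
  congr 2
  push_cast
  simp [ZMod.natCast_val, ZMod.cast_id]

lemma conj_eRoot : (starRingEnd ℂ) (eRoot n) = (eRoot n)⁻¹ := by
  rw [eRoot, ← Complex.exp_conj, ← Complex.exp_neg]
  congr 1
  simp [map_div₀, Complex.conj_I, map_ofNat]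
  ring

lemma conj_chE (t : ZMod n) : (starRingEnd ℂ) (chE n t) = chE n (-t) := by
  have h1 : chE n t * chE n (-t) = 1 := by rw [← chE_add]; simp [chE_zero]
  have h2 : (starRingEnd ℂ) (chE n t) = (chE n t)⁻¹ := by
    rw [chE, map_pow, conj_eRoot, inv_pow]
  rw [h2]
  have h3 : chE n (-t) * chE n t = 1 := by rw [mul_comm]; exact h1
  exact (eq_inv_of_mul_eq_one_left h3).symm

end Aux

section Aux2
variable (n : ℕ) [NeZero n]

lemma sum_zmod_pow_val (f : ℕ → ℂ) :
    ∑ k : ZMod n, f k.val = ∑ i ∈ Finset.range n, f i := by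
  refine Finset.sum_nbij' (fun k => k.val) (fun i => (i : ZMod n)) ?_ ?_ ?_ ?_ ?_
  · intro k _; exact Finset.mem_range.mpr (ZMod.val_lt k)
  · intro i _; exact Finset.mem_univ _
  · intro k _; simp [ZMod.natCast_val, ZMod.cast_id]
  · intro i hi; exact ZMod.val_natCast_of_lt (Finset.mem_range.mp hi)
  · intro k _; rfl

lemma chE_mul_val (k t : ZMod n) : chE n (k * t) = (eRoot n ^ t.val) ^ k.val := by
  rw [← pow_mul, mul_comm t.val, chE_natmul n k.val t.val]
  congr <;> simp [ZMod.natCast_val, ZMod.cast_id]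

lemma sumE (t : ZMod n) :
    ∑ k : ZMod n, chE n (k * t) = if t = 0 then (n : ℂ) else 0 := by
  simp only [chE_mul_val]
  rw [sum_zmod_pow_val n (fun i => (eRoot n ^ t.val) ^ i)]
  split_ifs with h
  · subst h; simp
  · have ht : 0 < t.val := Nat.pos_of_ne_zero (fun h0 => h ((ZMod.val_eq_zero t).mp h0))
    have hne : eRoot n ^ t.val ≠ 1 :=
      (eRoot_prim n).pow_ne_one_of_pos_of_lt ht.ne' (ZMod.val_lt t)
    rw [geom_sum_eq hne, ← pow_mul, mul_comm, pow_mul, eRoot_pow_n, one_pow]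
    simp

lemma dft_eq (x : ZMod n → ℝ) (k : ZMod n) :
    dft n x k = ∑ m : ZMod n, (x m : ℂ) * chE n (k * m) := by
  unfold dft
  congr 1; funext m
  rw [show Complex.exp (-(2 * Real.pi * Complex.I) / n) = eRoot n from rfl,
    chE_natmul n k.val m.val]
  congr 2 <;> simp [ZMod.natCast_val, ZMod.cast_id]

end Aux2



section Aux3
variable {a b c n : ℕ} [NeZero n]

lemma dftSlice_tmul (X : Tensor3 a b n) (Y : Tensor3 b c n) (k : ZMod n) :
    dftSlice (tmul X Y) k = dftSlice X k * dftSlice Y k := by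
  funext i j
  show dft n (tmul X Y i j) k = ∑ l, dft n (X i l) k * dft n (Y l j) k
  simp only [dft_eq, tmul]
  push_cast
  simp only [Finset.sum_mul]
  rw [Finset.sum_comm]
  refine Finset.sum_congr rfl fun l _ => ?_
  rw [Finset.sum_comm]
  simp only [Finset.mul_sum]
  conv_rhs => rw [Finset.sum_comm]
  refine Finset.sum_congr rfl fun p _ => ?_
  refine (Fintype.sum_equiv (Equiv.addRight p) _ _ fun q => ?_).symm
  simp only [Equiv.coe_addRight, add_sub_cancel_right, mul_add, chE_add]
  ring

lemma dftSlice_tId (k : ZMod n) : dftSlice (tId a n) k = (1 : Matrix (Fin a) (Fin a) ℂ) := by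
  funext i j
  show dft n (tId a n i j) k = (1 : Matrix (Fin a) (Fin a) ℂ) i j
  simp only [dft_eq, tId, Matrix.one_apply]
  by_cases h : i = j
  · subst h
    simp only [true_and, if_pos rfl]
    rw [Finset.sum_eq_single (0 : ZMod n)]
    · simp [chE_zero]
    · intro m _ hm; simp [hm]
    · intro hm; exact absurd (Finset.mem_univ _) hm
  · simp [h]

lemma dftSlice_tTr (X : Tensor3 a b n) (k : ZMod n) :
    dftSlice (tTr X) k = (dftSlice X k)ᴴ := by
  funext i j
  show dft n (tTr X i j) k = (starRingEnd ℂ) (dft n (X j i) k)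
  simp only [dft_eq, tTr]
  rw [map_sum]
  refine Fintype.sum_equiv (Equiv.neg (ZMod n)) _ _ fun m => ?_
  rw [Equiv.neg_apply, _root_.map_mul, Complex.conj_ofReal, conj_chE]
  congr 2
  ring

lemma dft_inj (x y : ZMod n → ℝ) (h : ∀ k, dft n x k = dft n y k) : x = y := by
  funext m
  have key : ∀ z : ZMod n → ℝ,
      ∑ k : ZMod n, dft n z k * chE n (-(k * m)) = (n : ℂ) * z m := by
    intro z
    simp only [dft_eq, Finset.sum_mul]
    rw [Finset.sum_comm]
    have hp : ∀ p : ZMod n, ∑ k : ZMod n, (z p : ℂ) * chE n (k * p) * chE n (-(k * m))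
        = (z p : ℂ) * (if p - m = 0 then (n : ℂ) else 0) := by
      intro p
      rw [← sumE n (p - m), Finset.mul_sum]
      refine Finset.sum_congr rfl fun k _ => ?_
      rw [mul_assoc, ← chE_add]
      congr 2
      ring
    simp only [hp]
    rw [Finset.sum_eq_single m]
    · simp [mul_comm]
    · intro p _ hpm
      rw [if_neg (fun hc => hpm (by rwa [sub_eq_zero] at hc)), mul_zero]
    · intro hm; exact absurd (Finset.mem_univ _) hm
  have hn : (n : ℂ) ≠ 0 := Nat.cast_ne_zero.mpr (NeZero.ne n)
  have heq : (n : ℂ) * x m = (n : ℂ) * y m := by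
    rw [← key x, ← key y]
    exact Finset.sum_congr rfl fun k _ => by rw [h k]
  exact_mod_cast mul_left_cancel₀ hn heq

lemma tensor_ext_of_dftSlice (X Y : Tensor3 a b n)
    (h : ∀ k, dftSlice X k = dftSlice Y k) : X = Y := by
  funext i j
  exact dft_inj (X i j) (Y i j) fun k => congrFun (congrFun (h k) i) j

end Aux3

/-- A tensor is orthogonal under the t-product iff every frontal slice of its
Fourier transform is unitary. -/
theorem stmt16 {n I₃ : ℕ} [NeZero I₃] (Q : Tensor3 n n I₃) :
    (tmul (tTr Q) Q = tId n I₃ ∧ tmul Q (tTr Q) = tId n I₃) ↔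
      ∀ k : ZMod I₃,
        (dftSlice Q k)ᴴ * dftSlice Q k = 1 ∧ dftSlice Q k * (dftSlice Q k)ᴴ = 1 := by
  constructor
  · rintro ⟨h1, h2⟩ k
    constructor
    · rw [← dftSlice_tTr, ← dftSlice_tmul, h1, dftSlice_tId]
    · rw [← dftSlice_tTr, ← dftSlice_tmul, h2, dftSlice_tId]
  · intro h
    constructor
    · refine tensor_ext_of_dftSlice _ _ fun k => ?_
      rw [dftSlice_tmul, dftSlice_tTr, dftSlice_tId, (h k).1]
    · refine tensor_ext_of_dftSlice _ _ fun k => ?_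
      rw [dftSlice_tmul, dftSlice_tTr, dftSlice_tId, (h k).2]
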